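/- Define real matrices H^{(k)} of order 2^k recursively by H^{(1)} = [[1,1],[1,−1]] and H^{(k+1)} = H^{(1)} ⊗ H^{(k)} (Kronecker product). For n ≥ 1, let A_n = [[0,1],[1,0]] ⊗ H^{(n)}, a matrix of order 2^{n+1}. Then A_n is symmetric with zero diagonal blocks and all off-block entries ±1 (so A_n is a signed adjacency matrix of the complete bipartite graph K_{2^n,2^n}), and its eigenvalues are √(2^n) and −√(2^n), each with multiplicity 2^n; that is, dim ker(A_n − √(2^n)·I) = 2^n and dim ker(A_n + √(2^n)·I) = 2^n. -/

import Mathlib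

open Matrix Kronecker

/-- Index type for the Hadamard matrix `H^{(j+1)}` of order `2^(j+1)`. -/
def hadIdx : ℕ → Type
  | 0 => Fin 2
  | (j + 1) => Fin 2 × hadIdx j

instance hadIdxFintype : (j : ℕ) → Fintype (hadIdx j)
  | 0 => inferInstanceAs (Fintype (Fin 2))
  | (j + 1) => letI := hadIdxFintype j; inferInstanceAs (Fintype (Fin 2 × hadIdx j))

instance hadIdxDecEq : (j : ℕ) → DecidableEq (hadIdx j)
  | 0 => inferInstanceAs (DecidableEq (Fin 2))
  | (j + 1) => letI := hadIdxDecEq j; inferInstanceAs (DecidableEq (Fin 2 × hadIdx j))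

/-- `hadamardMat j` is the Hadamard matrix `H^{(j+1)}` of order `2^(j+1)`, defined recursively
by `H^{(1)} = [[1,1],[1,-1]]` and `H^{(k+1)} = H^{(1)} ⊗ H^{(k)}`. -/
def hadamardMat : (j : ℕ) → Matrix (hadIdx j) (hadIdx j) ℝ
  | 0 => !![1, 1; 1, -1]
  | (j + 1) => (!![1, 1; 1, -1] : Matrix (Fin 2) (Fin 2) ℝ) ⊗ₖ hadamardMat j

lemma hadamardMat_zero : hadamardMat 0 = !![1, 1; 1, -1] := rfl

lemma hadamardMat_succ (j : ℕ) :
    hadamardMat (j + 1) = (!![1, 1; 1, -1] : Matrix (Fin 2) (Fin 2) ℝ) ⊗ₖ hadamardMat j := rfl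

lemma H1_entries (i i' : Fin 2) :
    (!![1, 1; 1, -1] : Matrix (Fin 2) (Fin 2) ℝ) i i' = 1 ∨
    (!![1, 1; 1, -1] : Matrix (Fin 2) (Fin 2) ℝ) i i' = -1 := by
  fin_cases i <;> fin_cases i' <;> simp

lemma H1_symm : (!![1, 1; 1, -1] : Matrix (Fin 2) (Fin 2) ℝ)ᵀ = !![1, 1; 1, -1] := by
  ext i k; fin_cases i <;> fin_cases k <;> simp

lemma H1_sq : (!![1, 1; 1, -1] : Matrix (Fin 2) (Fin 2) ℝ) * !![1, 1; 1, -1] = (2 : ℝ) • 1 := by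
  ext i k; fin_cases i <;> fin_cases k <;>
    simp [Matrix.mul_apply, Fin.sum_univ_two, Matrix.one_apply] <;> norm_num

lemma hadamard_entries (j : ℕ) : ∀ x y : hadIdx j,
    hadamardMat j x y = 1 ∨ hadamardMat j x y = -1 := by
  induction j with
  | zero => intro x y; exact H1_entries x y
  | succ j ih =>
    rintro ⟨i, x⟩ ⟨i', y⟩
    have key : hadamardMat (j + 1) (i, x) (i', y) =
        (!![1, 1; 1, -1] : Matrix (Fin 2) (Fin 2) ℝ) i i' * hadamardMat j x y := rfl
    rw [key]
    rcases H1_entries i i' with h1 | h1 <;> rcases ih x y with h2 | h2 <;>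
      simp [h1, h2]

lemma hadamard_symm (j : ℕ) : (hadamardMat j)ᵀ = hadamardMat j := by
  induction j with
  | zero => rw [hadamardMat_zero]; exact H1_symm
  | succ j ih =>
    show ((!![1, 1; 1, -1] : Matrix (Fin 2) (Fin 2) ℝ) ⊗ₖ hadamardMat j)ᵀ = (!![1, 1; 1, -1] : Matrix (Fin 2) (Fin 2) ℝ) ⊗ₖ hadamardMat j
    rw [← kroneckerMap_transpose, H1_symm, ih]

lemma hadamard_sq (j : ℕ) :
    hadamardMat j * hadamardMat j = ((2 : ℝ) ^ (j + 1)) • 1 := by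
  induction j with
  | zero =>
    show (!![1, 1; 1, -1] : Matrix (Fin 2) (Fin 2) ℝ) * !![1, 1; 1, -1] = ((2 : ℝ) ^ (0 + 1)) • (1 : Matrix (Fin 2) (Fin 2) ℝ)
    exact H1_sq.trans (by norm_num)
  | succ j ih =>
    show ((!![1, 1; 1, -1] : Matrix (Fin 2) (Fin 2) ℝ) ⊗ₖ hadamardMat j) * ((!![1, 1; 1, -1] : Matrix (Fin 2) (Fin 2) ℝ) ⊗ₖ hadamardMat j) =
      ((2 : ℝ) ^ (j + 1 + 1)) • (1 : Matrix (Fin 2 × hadIdx j) (Fin 2 × hadIdx j) ℝ)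
    rw [← Matrix.mul_kronecker_mul, H1_sq, ih, Matrix.smul_kronecker,
      Matrix.kronecker_smul, Matrix.one_kronecker_one, smul_smul]
    ring_nf

lemma hadIdx_card (j : ℕ) : Fintype.card (hadIdx j) = 2 ^ (j + 1) := by
  induction j with
  | zero => rfl
  | succ j ih =>
    show Fintype.card (Fin 2 × hadIdx j) = _
    rw [Fintype.card_prod, ih, Fintype.card_fin]
    ring

lemma B_sq : (!![0, 1; 1, 0] : Matrix (Fin 2) (Fin 2) ℝ) * !![0, 1; 1, 0] = 1 := by
  ext i k; fin_cases i <;> fin_cases k <;>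
    simp [Matrix.mul_apply, Fin.sum_univ_two, Matrix.one_apply]

lemma B_symm : (!![0, 1; 1, 0] : Matrix (Fin 2) (Fin 2) ℝ)ᵀ = !![0, 1; 1, 0] := by
  ext i k; fin_cases i <;> fin_cases k <;> simp

lemma DB_anticomm : (!![1, 0; 0, -1] : Matrix (Fin 2) (Fin 2) ℝ) * !![0, 1; 1, 0]
    = -(!![0, 1; 1, 0] * !![1, 0; 0, -1]) := by
  ext i k; fin_cases i <;> fin_cases k <;>
    simp [Matrix.mul_apply, Fin.sum_univ_two]

lemma D_sq : (!![1, 0; 0, -1] : Matrix (Fin 2) (Fin 2) ℝ) * !![1, 0; 0, -1] = 1 := by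
  ext i k; fin_cases i <;> fin_cases k <;>
    simp [Matrix.mul_apply, Fin.sum_univ_two, Matrix.one_apply]

lemma neg_kronecker {m n p q : Type*} (X : Matrix m n ℝ) (Y : Matrix p q ℝ) :
    (-X) ⊗ₖ Y = -(X ⊗ₖ Y) := by
  ext i k; simp

/-- For `n = j + 1 ≥ 1`, the matrix `A_n = [[0,1],[1,0]] ⊗ H^{(n)}` of order `2^(n+1)` is a
signed adjacency matrix of `K_{2^n, 2^n}` (symmetric, zero diagonal blocks, off-block entries
`±1`) whose eigenvalues are `√(2^n)` and `-√(2^n)`, each with multiplicity `2^n`. -/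
theorem signed_complete_bipartite_two_eigenvalues (j : ℕ)
    (A : Matrix (Fin 2 × hadIdx j) (Fin 2 × hadIdx j) ℝ)
    (hA : A = (!![0, 1; 1, 0] : Matrix (Fin 2) (Fin 2) ℝ) ⊗ₖ hadamardMat j) :
    Aᵀ = A ∧
    (∀ (i : Fin 2) (x y : hadIdx j), A (i, x) (i, y) = 0) ∧
    (∀ (i i' : Fin 2) (x y : hadIdx j), i ≠ i' →
      A (i, x) (i', y) = 1 ∨ A (i, x) (i', y) = -1) ∧
    Module.finrank ℝ
      (LinearMap.ker (A - Real.sqrt (2 ^ (j + 1)) •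
        (1 : Matrix (Fin 2 × hadIdx j) (Fin 2 × hadIdx j) ℝ)).mulVecLin) = 2 ^ (j + 1) ∧
    Module.finrank ℝ
      (LinearMap.ker (A + Real.sqrt (2 ^ (j + 1)) •
        (1 : Matrix (Fin 2 × hadIdx j) (Fin 2 × hadIdx j) ℝ)).mulVecLin) = 2 ^ (j + 1) := by
  set c : ℝ := Real.sqrt (2 ^ (j + 1)) with hc
  have hc0 : 0 < c := Real.sqrt_pos.mpr (by positivity)
  have hcc : c * c = 2 ^ (j + 1) := Real.mul_self_sqrt (by positivity)
  refine ⟨?_, ?_, ?_, ?_⟩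
  · rw [hA, ← kroneckerMap_transpose, B_symm, hadamard_symm]
  · intro i x y
    have h0 : A (i, x) (i, y) =
        (!![0, 1; 1, 0] : Matrix (Fin 2) (Fin 2) ℝ) i i * hadamardMat j x y := by rw [hA]; rfl
    have hBii : (!![0, 1; 1, 0] : Matrix (Fin 2) (Fin 2) ℝ) i i = 0 := by
      fin_cases i <;> simp
    rw [h0, hBii, zero_mul]
  · intro i i' x y hii
    have h0 : A (i, x) (i', y) =
        (!![0, 1; 1, 0] : Matrix (Fin 2) (Fin 2) ℝ) i i' * hadamardMat j x y := by rw [hA]; rfl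
    have hBii : (!![0, 1; 1, 0] : Matrix (Fin 2) (Fin 2) ℝ) i i' = 1 := by
      fin_cases i <;> fin_cases i' <;> simp_all
    rw [h0, hBii, one_mul]
    exact hadamard_entries j x y
  -- the eigenvalue part
  have hAsq : A * A = (c * c) • 1 := by
    rw [hA, ← Matrix.mul_kronecker_mul, B_sq, hadamard_sq, Matrix.kronecker_smul,
      Matrix.one_kronecker_one, hcc]
  set P := A - c • (1 : Matrix (Fin 2 × hadIdx j) (Fin 2 × hadIdx j) ℝ) with hP
  set Q := A + c • (1 : Matrix (Fin 2 × hadIdx j) (Fin 2 × hadIdx j) ℝ) with hQ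
  have hPQ : P * Q = 0 := by
    have expand : P * Q = A * A - (c * c) • 1 := by
      simp only [hP, hQ, Matrix.sub_mul, Matrix.mul_add, Matrix.smul_mul, Matrix.mul_smul,
        one_mul, mul_one, smul_smul]
      module
    rw [expand, hAsq, sub_self]
  have hQP : Q * P = 0 := by
    have expand : Q * P = A * A - (c * c) • 1 := by
      simp only [hP, hQ, Matrix.add_mul, Matrix.mul_sub, Matrix.smul_mul, Matrix.mul_smul,
        one_mul, mul_one, smul_smul]
      module
    rw [expand, hAsq, sub_self]
  set kf := LinearMap.ker P.mulVecLin with hkf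
  set kg := LinearMap.ker Q.mulVecLin with hkg
  have h2c : (2 * c) ≠ 0 := by positivity
  have hQPv : ∀ v, Q.mulVec v - P.mulVec v = (2 * c) • v := by
    intro v
    rw [hP, hQ, Matrix.add_mulVec, Matrix.sub_mulVec, Matrix.smul_mulVec,
      Matrix.one_mulVec]
    module
  have hinf : kf ⊓ kg = ⊥ := by
    rw [eq_bot_iff]
    rintro v ⟨hv1, hv2⟩
    have h1 : P.mulVec v = 0 := hv1
    have h2 : Q.mulVec v = 0 := hv2
    have h3 : (2 * c) • v = 0 := by rw [← hQPv v, h1, h2, sub_zero]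
    have hv : v = 0 := by
      rcases smul_eq_zero.mp h3 with h | h
      · exact absurd h h2c
      · exact h
    simp [hv]
  have hsup : kf ⊔ kg = ⊤ := by
    rw [eq_top_iff]
    intro v _
    rw [Submodule.mem_sup]
    refine ⟨(1 / (2 * c)) • Q.mulVec v, ?_, -((1 / (2 * c)) • P.mulVec v), ?_, ?_⟩
    · rw [hkf, LinearMap.mem_ker]
      show P.mulVec ((1 / (2 * c)) • Q.mulVec v) = 0
      rw [Matrix.mulVec_smul, Matrix.mulVec_mulVec, hPQ, Matrix.zero_mulVec, smul_zero]
    · rw [hkg, LinearMap.mem_ker]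
      show Q.mulVec (-((1 / (2 * c)) • P.mulVec v)) = 0
      rw [Matrix.mulVec_neg, Matrix.mulVec_smul, Matrix.mulVec_mulVec, hQP,
        Matrix.zero_mulVec, smul_zero, neg_zero]
    · rw [← smul_neg, ← smul_add, ← sub_eq_add_neg, hQPv v, smul_smul, one_div,
        inv_mul_cancel₀ h2c, one_smul]
  have hsum : Module.finrank ℝ kf + Module.finrank ℝ kg = 2 ^ (j + 2) := by
    have hfr := Submodule.finrank_sup_add_finrank_inf_eq kf kg
    rw [hsup, hinf, finrank_top, finrank_bot, add_zero,
      Module.finrank_fintype_fun_eq_card] at hfr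
    rw [← hfr, Fintype.card_prod, Fintype.card_fin, hadIdx_card]
    ring
  -- the flip matrix
  set D : Matrix (Fin 2 × hadIdx j) (Fin 2 × hadIdx j) ℝ :=
    (!![1, 0; 0, -1] : Matrix (Fin 2) (Fin 2) ℝ) ⊗ₖ (1 : Matrix (hadIdx j) (hadIdx j) ℝ)
    with hD
  have hDD : D * D = 1 := by
    rw [hD, ← Matrix.mul_kronecker_mul, D_sq, one_mul, Matrix.one_kronecker_one]
  have hDA : D * A = -(A * D) := by
    rw [hD, hA, ← Matrix.mul_kronecker_mul, ← Matrix.mul_kronecker_mul, one_mul, mul_one,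
      DB_anticomm, neg_kronecker]
  have hAD : A * D = -(D * A) := by rw [hDA, neg_neg]
  have hPD : P * D = -(D * Q) := by
    rw [hP, hQ, Matrix.sub_mul, Matrix.mul_add, Matrix.smul_mul, one_mul, hAD,
      Matrix.mul_smul, mul_one]
    abel
  have hQD : Q * D = -(D * P) := by
    rw [hP, hQ, Matrix.add_mul, Matrix.mul_sub, Matrix.smul_mul, one_mul, hAD,
      Matrix.mul_smul, mul_one]
    abel
  set E : ((Fin 2 × hadIdx j) → ℝ) ≃ₗ[ℝ] ((Fin 2 × hadIdx j) → ℝ) :=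
    LinearEquiv.ofLinear D.mulVecLin D.mulVecLin
      (by rw [← Matrix.mulVecLin_mul, hDD, Matrix.mulVecLin_one])
      (by rw [← Matrix.mulVecLin_mul, hDD, Matrix.mulVecLin_one]) with hE
  have hmap : Submodule.map (E : ((Fin 2 × hadIdx j) → ℝ) →ₗ[ℝ] _) kg = kf := by
    apply le_antisymm
    · rintro w ⟨v, hv, rfl⟩
      have hv' : Q.mulVec v = 0 := hv
      show P.mulVec (D.mulVec v) = 0
      rw [Matrix.mulVec_mulVec, hPD, Matrix.neg_mulVec, ← Matrix.mulVec_mulVec, hv',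
        Matrix.mulVec_zero, neg_zero]
    · intro w hw
      have hw' : P.mulVec w = 0 := hw
      refine ⟨D.mulVec w, ?_, ?_⟩
      · show Q.mulVec (D.mulVec w) = 0
        rw [Matrix.mulVec_mulVec, hQD, Matrix.neg_mulVec, ← Matrix.mulVec_mulVec, hw',
          Matrix.mulVec_zero, neg_zero]
      · show D.mulVec (D.mulVec w) = w
        rw [Matrix.mulVec_mulVec, hDD, Matrix.one_mulVec]
  have heq : Module.finrank ℝ kf = Module.finrank ℝ kg := by
    rw [← hmap, LinearEquiv.finrank_map_eq]
  have hpow : (2 : ℕ) ^ (j + 2) = 2 ^ (j + 1) + 2 ^ (j + 1) := by ring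
  exact ⟨by omega, by omega⟩
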